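/- Let u ∈ C(M,ℝ) and suppose the value ∫_M u·Q_ω dμ_ω is the same for all ω ∈ C(M,ℝ) (i.e. ∫_M u·Q_ω dμ_ω = ∫_M u·Q_{ω'} dμ_{ω'} for all ω, ω' ∈ C(M,ℝ)). Then u lies in the kernel of P. (Intermediate claim in the proof of Proposition 3.1.) -/

import Mathlib

open MeasureTheory

variable {M : Type*} [TopologicalSpace M] [MeasurableSpace M]

/-- The transformed Q-curvature `Q_ω = e^{-nω}(Q + Pω)`. -/
noncomputable def Qcurv (n : ℝ) (P : C(M, ℝ) →ₗ[ℝ] C(M, ℝ)) (Q ω : C(M, ℝ)) : C(M, ℝ) :=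
  ⟨fun x => Real.exp (-n * ω x) * (Q x + P ω x),
    (Real.continuous_exp.comp (continuous_const.mul ω.continuous)).mul
      (Q.continuous.add (P ω).continuous)⟩

/-- The conformally rescaled measure `μ_ω`, with density `e^{nω}` w.r.t. `μ`. -/
noncomputable def confMeasure (μ : Measure M) (n : ℝ) (ω : C(M, ℝ)) : Measure M :=
  μ.withDensity fun x => ENNReal.ofReal (Real.exp (n * ω x))

/-- `𝒩(𝒬) = {u ∈ ker P : ∫ u·Q dμ = 0}`. -/
def NQ (μ : Measure M) (P : C(M, ℝ) →ₗ[ℝ] C(M, ℝ)) (Q : C(M, ℝ)) : Set C(M, ℝ) :=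
  {u | P u = 0 ∧ ∫ x, u x * Q x ∂μ = 0}

/-- `ℱ = ⋂_ω ℱ^ω`, where `ℱ^ω` is the set of `f` not `L²(μ_ω)`-orthogonal to `𝒩(𝒬)`. -/
def Fcal (μ : Measure M) (n : ℝ) (P : C(M, ℝ) →ₗ[ℝ] C(M, ℝ)) (Q : C(M, ℝ)) : Set C(M, ℝ) :=
  {f | ∀ ω : C(M, ℝ), ∃ u ∈ NQ μ P Q, ∫ x, f x * u x ∂(confMeasure μ n ω) ≠ 0}

variable [BorelSpace M] [CompactSpace M] [ConnectedSpace M]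
variable (μ : Measure M) [IsFiniteMeasure μ] [Measure.IsOpenPosMeasure μ]
variable (n : ℝ) (P : C(M, ℝ) →ₗ[ℝ] C(M, ℝ)) (Q : C(M, ℝ))


theorem stmt10
    (hn : 0 < n)
    (hPc : ∀ c : ℝ, P (ContinuousMap.const M c) = 0)
    (hPsa : ∀ u v : C(M, ℝ), ∫ x, u x * P v x ∂μ = ∫ x, P u x * v x ∂μ)
    (u : C(M, ℝ))
    (h : ∀ ω ω' : C(M, ℝ),
      ∫ x, u x * Qcurv n P Q ω x ∂(confMeasure μ n ω) =
        ∫ x, u x * Qcurv n P Q ω' x ∂(confMeasure μ n ω')) :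
    P u = 0 := by

  -- Step 1: rewrite the integral over confMeasure as an integral over μ.
  have cont_int : ∀ f : M → ℝ, Continuous f → Integrable f μ := fun f hf =>
    hf.integrable_of_hasCompactSupport (HasCompactSupport.of_compactSpace f)
  have key : ∀ ω : C(M, ℝ),
      ∫ x, u x * Qcurv n P Q ω x ∂(confMeasure μ n ω)
        = ∫ x, u x * (Q x + P ω x) ∂μ := by
    intro ω
    rw [confMeasure]
    have hm : Measurable fun x => (Real.exp (n * ω x)).toNNReal :=
      (Real.measurable_exp.comp ((measurable_const.mul ω.continuous.measurable))).real_toNNReal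
    have : (fun x => ENNReal.ofReal (Real.exp (n * ω x)))
        = fun x => (((Real.exp (n * ω x)).toNNReal : NNReal) : ENNReal) := rfl
    rw [this, integral_withDensity_eq_integral_smul hm]
    congr 1
    ext x
    have : ((Real.exp (n * ω x)).toNNReal : ℝ) = Real.exp (n * ω x) :=
      Real.coe_toNNReal _ (Real.exp_pos _).le
    simp only [NNReal.smul_def, this, Qcurv, ContinuousMap.coe_mk, smul_eq_mul]
    rw [show Real.exp (n * ω x) * (u x * (Real.exp (-n * ω x) * (Q x + P ω x)))
        = (Real.exp (n * ω x) * Real.exp (-n * ω x)) * (u x * (Q x + P ω x)) by ring,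
      ← Real.exp_add]
    ring_nf
    simp
  -- Step 2: for all ω, ∫ u • Pω dμ = 0.
  have hP0 : P 0 = 0 := map_zero P
  have h2 : ∀ ω : C(M, ℝ), ∫ x, u x * P ω x ∂μ = 0 := by
    intro ω
    have := h ω 0
    rw [key ω, key 0] at this
    have e1 : ∫ x, u x * (Q x + P ω x) ∂μ
        = (∫ x, u x * Q x ∂μ) + ∫ x, u x * P ω x ∂μ := by
      rw [← integral_add (cont_int (fun x => u x * Q x) (u.continuous.mul Q.continuous))
          (cont_int (fun x => u x * P ω x) (u.continuous.mul (P ω).continuous))]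
      congr 1; ext x; ring
    have e2 : ∫ x, u x * (Q x + P (0 : C(M, ℝ)) x ) ∂μ = ∫ x, u x * Q x ∂μ := by
      simp [hP0]
    rw [e1, e2] at this
    linarith
  -- Step 3: take ω = u in self-adjointness, then ω = P u.
  have h3 : ∀ ω : C(M, ℝ), ∫ x, P u x * ω x ∂μ = 0 := fun ω => (hPsa u ω).symm.trans (h2 ω)
  have h4 : ∫ x, P u x * P u x ∂μ = 0 := h3 (P u)
  have hnn : 0 ≤ fun x => P u x * P u x := fun x => mul_self_nonneg _
  have hae : (fun x => P u x * P u x) =ᵐ[μ] 0 :=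
    (integral_eq_zero_iff_of_nonneg hnn
      (cont_int _ ((P u).continuous.mul (P u).continuous))).mp h4
  have heq : (fun x => P u x * P u x) = (0 : M → ℝ) :=
    (((P u).continuous.mul (P u).continuous).ae_eq_iff_eq μ continuous_const).mp hae
  ext x
  have := congrFun heq x
  simp only [Pi.zero_apply, mul_self_eq_zero] at this
  simpa using this
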